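/- Under the CFL-type condition Δt/h^α ≤ 1/(2 ε C_α (1 + 1/α − ζ(α−1))), the explicit Euler scheme for the natural condition satisfies a discrete comparison principle: for every n ≥ 0 and every j with |j| < J, min_{|k| ≤ J} P^n_k ≤ P^{n+1}_j ≤ max_{|k| ≤ J} P^n_k (because P^{n+1}_j is a convex combination of the values {P^n_k : |k| ≤ J}: the stencil coefficients are nonnegative and sum exactly to 1). -/

import Mathlib

open scoped BigOperators

/-- The constant `C_α = α Γ((1+α)/2) / (2^{1-α} √π Γ(1-α/2))`. -/
noncomputable def Cconst (α : ℝ) : ℝ :=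
  α * Real.Gamma ((1 + α) / 2) /
    ((2 : ℝ) ^ (1 - α) * Real.sqrt Real.pi * Real.Gamma (1 - α / 2))

/-- The real value of the Riemann zeta function at a real argument. -/
noncomputable def zetaR (s : ℝ) : ℝ := (riemannZeta (s : ℂ)).re

/-- The double-primed sum `Σ''_{k=a, k≠0}^{b} g(k)`: the sum over integers `a ≤ k ≤ b`,
omitting `k = 0`, where the end terms `k = a` and `k = b` carry weight `1/2`. -/
noncomputable def dsum (a b : ℤ) (g : ℤ → ℝ) : ℝ :=
  ∑ k ∈ (Finset.Icc a b).erase 0, (if k = a ∨ k = b then (1 : ℝ) / 2 else 1) * g k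

section PV19zeta
open Complex Set

open Complex Set

noncomputable def PV19G (s : ℂ) : ℂ :=
  ∑' k : ℕ, ((2 * (k : ℂ) + 1) ^ (-s) - (2 * (k : ℂ) + 2) ^ (-s))

lemma PV19_ne1 (k : ℕ) : (2 * (k : ℂ) + 1) ≠ 0 := by
  have : (2 * (k : ℂ) + 1) = ((2 * k + 1 : ℕ) : ℂ) := by push_cast; ring
  rw [this]; exact Nat.cast_ne_zero.mpr (by omega)

lemma PV19_ne2 (k : ℕ) : (2 * (k : ℂ) + 2) ≠ 0 := by
  have : (2 * (k : ℂ) + 2) = ((2 * k + 2 : ℕ) : ℂ) := by push_cast; ring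
  rw [this]; exact Nat.cast_ne_zero.mpr (by omega)

lemma PV19_hasDerivAt {s : ℂ} (hs : s ≠ 0) {y : ℝ} (hy : y ≠ 0) :
    HasDerivAt (fun t : ℝ => (t : ℂ) ^ (-s)) (-s * (y : ℂ) ^ (-s - 1)) y := by
  have hr : (-s - 1 : ℂ) ≠ -1 := by
    intro hcon; apply hs; linear_combination -hcon
  have H := hasDerivAt_ofReal_cpow_const' hy hr
  have h1 : (-s - 1 + 1 : ℂ) = -s := by ring
  rw [h1] at H
  have H2 := H.const_mul (-s)
  have hfun : (fun t : ℝ => -s * ((t : ℂ) ^ (-s) / (-s))) = fun t : ℝ => (t : ℂ) ^ (-s) := by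
    funext t; field_simp
  rw [hfun] at H2
  exact H2

lemma PV19_norm_term_le (k : ℕ) {s : ℂ} (hs : 0 < s.re) :
    ‖(2 * (k : ℂ) + 1) ^ (-s) - (2 * (k : ℂ) + 2) ^ (-s)‖
      ≤ ‖s‖ * (2 * (k : ℝ) + 1) ^ (-1 - s.re) := by
  have hs0 : s ≠ 0 := fun hcon => by simp [hcon] at hs
  set a : ℝ := 2 * (k : ℝ) + 1 with ha
  have hk0 : (0:ℝ) ≤ (k:ℝ) := Nat.cast_nonneg k
  have ha1 : (1 : ℝ) ≤ a := by rw [ha]; linarith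
  set f : ℝ → ℂ := fun t => (t : ℂ) ^ (-s) with hf
  have key := norm_image_sub_le_of_norm_deriv_le_segment'
    (f := f) (a := a) (b := a + 1) (f' := fun y => -s * (y : ℂ) ^ (-s - 1))
    (C := ‖s‖ * a ^ (-1 - s.re)) ?_ ?_ (a + 1) (by constructor <;> linarith)
  · have e1 : ((a : ℝ) : ℂ) = 2 * (k : ℂ) + 1 := by push_cast [ha]; ring
    have e2 : ((a + 1 : ℝ) : ℂ) = 2 * (k : ℂ) + 2 := by push_cast [ha]; ring
    have h3 : ‖f (a+1) - f a‖ ≤ ‖s‖ * a ^ (-1 - s.re) * 1 := by simpa using key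
    simp only [hf, e1, e2] at h3
    calc ‖(2 * (k : ℂ) + 1) ^ (-s) - (2 * (k : ℂ) + 2) ^ (-s)‖
        = ‖(2 * (k : ℂ) + 2) ^ (-s) - (2 * (k : ℂ) + 1) ^ (-s)‖ := norm_sub_rev _ _
      _ ≤ ‖s‖ * a ^ (-1 - s.re) := by simpa using h3
  · intro y hy
    have hy0 : y ≠ 0 := by intro hcon; rw [hcon] at hy; rcases hy with ⟨h1, _⟩; linarith
    exact (PV19_hasDerivAt hs0 hy0).hasDerivWithinAt
  · intro y hy
    rcases hy with ⟨h1, h2⟩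
    have hy0 : (0 : ℝ) < y := by linarith
    rw [norm_mul, norm_neg]
    have hnorm : ‖(y : ℂ) ^ (-s - 1)‖ = y ^ (-s-1).re := by
      rw [Complex.norm_cpow_eq_rpow_re_of_pos hy0]
    rw [hnorm]
    have hre : (-s - 1 : ℂ).re = -1 - s.re := by simp; ring
    rw [hre]
    apply mul_le_mul_of_nonneg_left _ (norm_nonneg s)
    exact Real.rpow_le_rpow_of_nonpos (by linarith) h1 (by linarith)

lemma PV19_analyticAt_G {s₀ : ℂ} (h : 0 < s₀.re) : AnalyticAt ℂ PV19G s₀ := by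
  set σ := s₀.re with hσ
  have hδ0 : 0 < σ / 2 := by positivity
  have hmem : ∀ s ∈ Metric.ball s₀ (σ/2), σ / 2 < s.re ∧ ‖s‖ ≤ ‖s₀‖ + σ := by
    intro s hsU
    have hd : ‖s - s₀‖ < σ/2 := by rw [Metric.mem_ball, dist_eq_norm] at hsU; exact hsU
    have h2 : |(s - s₀).re| ≤ ‖s - s₀‖ := Complex.abs_re_le_norm _
    have h3 : (s - s₀).re = s.re - σ := by simp [hσ]
    rw [h3] at h2
    have h4 := abs_le.mp h2
    refine ⟨by linarith [h4.1], ?_⟩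
    calc ‖s‖ = ‖s₀ + (s - s₀)‖ := by ring_nf
      _ ≤ ‖s₀‖ + ‖s - s₀‖ := norm_add_le _ _
      _ ≤ ‖s₀‖ + σ := by linarith
  have hdiff : DifferentiableOn ℂ PV19G (Metric.ball s₀ (σ/2)) := by
    apply Complex.differentiableOn_tsum_of_summable_norm
      (F := fun (k : ℕ) (s : ℂ) => (2 * (k : ℂ) + 1) ^ (-s) - (2 * (k : ℂ) + 2) ^ (-s))
      (u := fun k => (‖s₀‖ + σ) * (2 * (k : ℝ) + 1) ^ (-1 - σ/2))
    · apply Summable.mul_left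
      have h1 : Summable (fun n : ℕ => (n : ℝ) ^ (-1 - σ/2)) :=
        Real.summable_nat_rpow.mpr (by linarith)
      have hbase : Summable (fun k : ℕ => ((k : ℝ) + 1) ^ (-1 - σ/2)) := by
        have h2 := h1.comp_injective Nat.succ_injective
        refine h2.congr fun k => ?_
        simp [Function.comp, Nat.succ_eq_add_one]
      apply Summable.of_nonneg_of_le (fun k => by positivity) _ hbase
      intro k
      exact Real.rpow_le_rpow_of_nonpos (by positivity) (by push_cast; linarith) (by linarith)
    · intro k
      apply DifferentiableOn.sub <;>
        exact ((differentiable_neg).const_cpow (Or.inl (by first | exact PV19_ne1 k | exact PV19_ne2 k))).differentiableOn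
    · exact Metric.isOpen_ball
    · intro k w hw
      obtain ⟨h1, h2⟩ := hmem w hw
      refine le_trans (PV19_norm_term_le k (by linarith)) ?_
      have hk0 : (0:ℝ) ≤ (k:ℝ) := Nat.cast_nonneg k
      apply mul_le_mul h2 ?_ (by positivity) (by positivity)
      apply Real.rpow_le_rpow_of_exponent_le (by linarith) (by linarith)
  exact ((hdiff.analyticOnNhd Metric.isOpen_ball) s₀ (Metric.mem_ball_self hδ0))

lemma PV19_G_eq {s : ℂ} (hs : 1 < s.re) :
    PV19G s = (1 - 2 ^ ((1 : ℂ) - s)) * riemannZeta s := by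
  have hzeta := zeta_eq_tsum_one_div_nat_add_one_cpow hs
  set a : ℕ → ℂ := fun n => ((n : ℂ) + 1) ^ (-s) with ha
  have hsum : Summable a := by
    have h0 : Summable (fun n : ℕ => 1 / (n : ℂ) ^ s) := Complex.summable_one_div_nat_cpow.mpr hs
    have h1 := h0.comp_injective Nat.succ_injective
    refine h1.congr fun n => ?_
    simp only [Function.comp, ha, Nat.succ_eq_add_one]
    rw [cpow_neg]
    push_cast
    rw [one_div]
  have hae : ∀ n : ℕ, a (2*n) = (2 * (n:ℂ) + 1) ^ (-s) := by
    intro n; simp only [ha]; push_cast; ring_nf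
  have hao : ∀ n : ℕ, a (2*n+1) = (2 * (n:ℂ) + 2) ^ (-s) := by
    intro n; simp only [ha]; push_cast; ring_nf
  have hse : Summable (fun n : ℕ => a (2*n)) := by
    have := hsum.comp_injective (fun m n h => by dsimp at h; omega : Function.Injective (fun n : ℕ => 2*n))
    exact this
  have hso : Summable (fun n : ℕ => a (2*n+1)) := by
    have := hsum.comp_injective (fun m n h => by dsimp at h; omega : Function.Injective (fun n : ℕ => 2*n+1))
    exact this
  have hsplit : ∑' k : ℕ, a (2*k) + ∑' k : ℕ, a (2*k+1) = ∑' n : ℕ, a n :=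
    tsum_even_add_odd hse hso
  have hzeta' : riemannZeta s = ∑' n : ℕ, a n := by
    rw [hzeta]
    refine tsum_congr fun n => ?_
    simp only [ha]
    rw [cpow_neg, one_div]
  -- odd part equals 2^{-s} ζ(s)
  have hodd : ∑' k : ℕ, a (2*k+1) = 2 ^ (-s) * riemannZeta s := by
    have : ∀ k : ℕ, a (2*k+1) = 2 ^ (-s) * ((k:ℂ)+1) ^ (-s) := by
      intro k
      rw [hao]
      have hcast : (2 * (k:ℂ) + 2) = ((2:ℝ) : ℂ) * (((k:ℝ) + 1 : ℝ) : ℂ) := by push_cast; ring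
      rw [hcast, Complex.mul_cpow_ofReal_nonneg (by norm_num) (by positivity)]
      norm_num
    rw [tsum_congr this, tsum_mul_left, hzeta']
  have hG : PV19G s = ∑' k : ℕ, a (2*k) - ∑' k : ℕ, a (2*k+1) := by
    rw [PV19G]
    rw [← Summable.tsum_sub hse hso]
    refine tsum_congr fun k => ?_
    rw [hae, hao]
  rw [hG]
  have h2s : (2 : ℂ) ^ ((1:ℂ) - s) = 2 * 2 ^ (-s) := by
    rw [show (1:ℂ) - s = 1 + -s by ring, Complex.cpow_add _ _ (by norm_num), Complex.cpow_one]
  have heven : ∑' k : ℕ, a (2*k) = riemannZeta s - 2 ^ (-s) * riemannZeta s := by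
    have := hsplit
    rw [hodd] at this
    rw [← hzeta'] at this
    linear_combination this
  rw [heven, hodd, h2s]; ring

lemma PV19_zeta_real_nonneg {x : ℝ} (hx : 1 < x) :
    ∃ r : ℝ, 0 ≤ r ∧ riemannZeta (x : ℂ) = (r : ℂ) := by
  refine ⟨∑' n : ℕ, ((n:ℝ)+1) ^ (-x), tsum_nonneg (fun n => by positivity), ?_⟩
  rw [zeta_eq_tsum_one_div_nat_add_one_cpow (by simpa using hx)]
  rw [Complex.ofReal_tsum]
  refine tsum_congr fun n => ?_
  have hc : (((n:ℝ) + 1 : ℝ) : ℂ) = (n:ℂ) + 1 := by push_cast; rfl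
  rw [Complex.ofReal_cpow (by positivity) (-x), hc, Complex.ofReal_neg, cpow_neg, one_div]

lemma PV19_zeta_nonpos_Ioo {x : ℝ} (hx0 : 0 < x) (hx1 : x < 1) :
    (riemannZeta (x : ℂ)).re ≤ 0 := by
  set A : Set ℂ := {s | 0 < s.re} ∩ {s | s.re < 1} with hA
  set B : Set ℂ := {s | 0 < s.re} ∩ {s | 0 < s.im} with hB
  set C : Set ℂ := {s | 1 < s.re} with hC
  set W : Set ℂ := (A ∪ B) ∪ C with hW
  have hpre : IsPreconnected W := by
    have cA : Convex ℝ A := (convex_halfSpace_re_gt 0).inter (convex_halfSpace_re_lt 1)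
    have cB : Convex ℝ B := (convex_halfSpace_re_gt 0).inter (convex_halfSpace_im_gt 0)
    have cC : Convex ℝ C := convex_halfSpace_re_gt 1
    have p1 : (((1/2:ℝ):ℂ) + Complex.I) ∈ A := by
      refine ⟨?_, ?_⟩ <;> · simp only [Set.mem_setOf_eq, Complex.add_re, Complex.add_im,
        Complex.ofReal_re, Complex.ofReal_im, Complex.I_re, Complex.I_im]; norm_num
    have p1' : (((1/2:ℝ):ℂ) + Complex.I) ∈ B := by
      refine ⟨?_, ?_⟩ <;> · simp only [Set.mem_setOf_eq, Complex.add_re, Complex.add_im,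
        Complex.ofReal_re, Complex.ofReal_im, Complex.I_re, Complex.I_im]; norm_num
    have pAB : IsPreconnected (A ∪ B) :=
      IsPreconnected.union _ p1 p1' cA.isPreconnected cB.isPreconnected
    have p2 : (((2:ℝ):ℂ) + Complex.I) ∈ A ∪ B := by
      right; refine ⟨?_, ?_⟩ <;> · simp only [Set.mem_setOf_eq, Complex.add_re, Complex.add_im,
        Complex.ofReal_re, Complex.ofReal_im, Complex.I_re, Complex.I_im]; norm_num
    have p2' : (((2:ℝ):ℂ) + Complex.I) ∈ C := by
      simp only [hC, Set.mem_setOf_eq, Complex.add_re, Complex.ofReal_re, Complex.I_re]; norm_num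
    exact IsPreconnected.union _ p2 p2' pAB cC.isPreconnected
  have hW1 : ∀ s ∈ W, 0 < s.re := by
    rintro s (( ⟨h, _⟩ | ⟨h, _⟩) | h)
    · exact h
    · exact h
    · exact lt_trans one_pos h
  have hW2 : ∀ s ∈ W, s ≠ 1 := by
    rintro s ((⟨hp, hq⟩ | ⟨hp, hq⟩) | hp) hcon
    · exact absurd (hcon ▸ hq) (by simp)
    · exact absurd (hcon ▸ hq) (by simp)
    · exact absurd (hcon ▸ hp) (by simp [hC])
  have hGA : AnalyticOnNhd ℂ PV19G W := fun s hs => PV19_analyticAt_G (hW1 s hs)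
  have hzd : DifferentiableOn ℂ riemannZeta {(1:ℂ)}ᶜ := fun z hz =>
    (differentiableAt_riemannZeta (Set.mem_compl_singleton_iff.mp hz)).differentiableWithinAt
  have hzetaA : AnalyticOnNhd ℂ riemannZeta {(1:ℂ)}ᶜ :=
    hzd.analyticOnNhd isOpen_compl_singleton
  have hFA : AnalyticOnNhd ℂ (fun s => (1 - 2 ^ ((1:ℂ) - s)) * riemannZeta s) W := by
    intro s hs
    have h1 : AnalyticAt ℂ (fun s : ℂ => (1 : ℂ) - 2 ^ ((1:ℂ) - s)) s := by
      apply Differentiable.analyticAt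
      exact (differentiable_const _).sub
        (((differentiable_const _).sub differentiable_id).const_cpow (Or.inl two_ne_zero))
    exact h1.mul (hzetaA s (by simpa using hW2 s hs))
  have h2W : (2:ℂ) ∈ W := by
    right; simp only [hC, Set.mem_setOf_eq, Complex.re_ofNat]; norm_num
  have hev : PV19G =ᶠ[nhds (2:ℂ)] (fun s => (1 - 2 ^ ((1:ℂ) - s)) * riemannZeta s) := by
    have hop : IsOpen {s : ℂ | 1 < s.re} := isOpen_lt continuous_const Complex.continuous_re
    refine Filter.eventuallyEq_of_mem (hop.mem_nhds (by norm_num)) fun s hs => PV19_G_eq hs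
  have hEq := hGA.eqOn_of_preconnected_of_eventuallyEq hFA hpre h2W hev
  have hxW : (x : ℂ) ∈ W := by
    left; left
    exact ⟨by simpa using hx0, by simpa using hx1⟩
  have heq := hEq hxW
  set g : ℝ := ∑' k : ℕ, ((2*(k:ℝ)+1) ^ (-x) - (2*(k:ℝ)+2) ^ (-x)) with hgdef
  have hg0 : 0 ≤ g := by
    apply tsum_nonneg
    intro k
    have hk0 : (0:ℝ) ≤ (k:ℝ) := Nat.cast_nonneg k
    have := Real.rpow_le_rpow_of_nonpos (x := 2*(k:ℝ)+1) (y := 2*(k:ℝ)+2)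
      (by linarith) (by linarith) (by linarith : -x ≤ 0)
    linarith
  have hgG : PV19G (x : ℂ) = (g : ℂ) := by
    rw [PV19G, hgdef, Complex.ofReal_tsum]
    refine tsum_congr fun k => ?_
    have hk0 : (0:ℝ) ≤ (k:ℝ) := Nat.cast_nonneg k
    rw [Complex.ofReal_sub,
      Complex.ofReal_cpow (by linarith) (-x), Complex.ofReal_cpow (by linarith) (-x)]
    push_cast
    ring
  set d : ℝ := 1 - (2:ℝ) ^ (1 - x) with hddef
  have hd : d < 0 := by
    have : (1:ℝ) < (2:ℝ) ^ (1-x) := by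
      rw [Real.one_lt_rpow_iff_of_pos (by norm_num)]
      left; constructor <;> norm_num; linarith
    linarith
  have hfac : (1 - (2:ℂ) ^ ((1:ℂ) - (x:ℂ))) = (d : ℂ) := by
    have h1 : ((1:ℂ) - (x:ℂ)) = ((1 - x : ℝ) : ℂ) := by push_cast; ring
    have h2 : ((2:ℝ) : ℂ) ^ (((1 - x : ℝ)) : ℂ) = (((2:ℝ) ^ (1-x) : ℝ) : ℂ) :=
      (Complex.ofReal_cpow (by norm_num) _).symm
    rw [hddef]
    push_cast
    rw [h1, ← h2]
    norm_num
  rw [hgG] at heq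
  have heq2 : (g:ℂ) = (1 - (2:ℂ) ^ ((1:ℂ) - (x:ℂ))) * riemannZeta (x:ℂ) := heq
  rw [hfac] at heq2
  have hdne : (d : ℂ) ≠ 0 := by
    simpa using ne_of_lt hd
  have hz : riemannZeta (x : ℂ) = ((g / d : ℝ) : ℂ) := by
    rw [Complex.ofReal_div]
    field_simp
    rw [heq2]; ring
  rw [hz, Complex.ofReal_re]
  exact div_nonpos_iff.mpr (Or.inl ⟨hg0, le_of_lt hd⟩)

lemma PV19_zetaR_nonpos {x : ℝ} (h1 : -1 < x) (h2 : x < 1) : (riemannZeta (x : ℂ)).re ≤ 0 := by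
  rcases lt_trichotomy x 0 with hx | hx | hx
  · set s : ℝ := 1 - x with hs
    have hs1 : 1 < s := by rw [hs]; linarith
    have hs2 : s < 2 := by rw [hs]; linarith
    obtain ⟨r, hr0, hrζ⟩ := PV19_zeta_real_nonneg hs1
    have hcond1 : ∀ n : ℕ, (s:ℂ) ≠ -(n:ℂ) := by
      intro n hcon
      have : s = -(n:ℝ) := by exact_mod_cast congrArg Complex.re hcon
      have hn : (0:ℝ) ≤ (n:ℝ) := Nat.cast_nonneg n
      linarith
    have hcond2 : (s:ℂ) ≠ 1 := by
      intro hcon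
      have : s = 1 := by exact_mod_cast congrArg Complex.re hcon
      linarith
    have hfe := riemannZeta_one_sub hcond1 hcond2
    have hx' : (1 : ℂ) - (s:ℂ) = (x:ℂ) := by rw [hs]; push_cast; ring
    rw [hx'] at hfe
    have hGam : Complex.Gamma (s:ℂ) = ((Real.Gamma s : ℝ) : ℂ) := Complex.Gamma_ofReal s
    have hcos : Complex.cos ((Real.pi:ℂ) * (s:ℂ) / 2) = ((Real.cos (Real.pi * s / 2) : ℝ) : ℂ) := by
      have harg : ((Real.pi:ℂ) * (s:ℂ) / 2) = ((Real.pi * s / 2 : ℝ) : ℂ) := by push_cast; ring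
      rw [harg, ← Complex.ofReal_cos]
    have hpow : ((2:ℂ) * (Real.pi:ℂ)) ^ (-(s:ℂ)) = (((2*Real.pi) ^ (-s) : ℝ) : ℂ) := by
      have h2 : ((2:ℂ) * (Real.pi:ℂ)) = (((2*Real.pi : ℝ)) : ℂ) := by push_cast; ring
      have h3 : (-(s:ℂ)) = ((-s : ℝ) : ℂ) := by push_cast; ring
      rw [h2, h3, ← Complex.ofReal_cpow (by positivity)]
    rw [hfe, hGam, hcos, hpow, hrζ]
    have hrw : (2 : ℂ) * (((2*Real.pi) ^ (-s) : ℝ) : ℂ) * ((Real.Gamma s : ℝ) : ℂ)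
        * ((Real.cos (Real.pi * s / 2) : ℝ) : ℂ) * (r : ℂ)
        = (((2 * ((2*Real.pi) ^ (-s)) * Real.Gamma s * Real.cos (Real.pi * s / 2) * r : ℝ)) : ℂ) := by
      push_cast; ring
    rw [hrw, Complex.ofReal_re]
    have hcosneg : Real.cos (Real.pi * s / 2) ≤ 0 := by
      apply Real.cos_nonpos_of_pi_div_two_le_of_le
      · nlinarith [Real.pi_pos]
      · nlinarith [Real.pi_pos]
    have hq : 0 ≤ 2 * ((2*Real.pi) ^ (-s)) * Real.Gamma s * r := by
      have := Real.Gamma_pos_of_pos (by linarith : (0:ℝ) < s)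
      positivity
    nlinarith [mul_nonpos_of_nonneg_of_nonpos hq hcosneg]
  · rw [hx]
    norm_num [riemannZeta_zero]
  · exact PV19_zeta_nonpos_Ioo hx h2

end PV19zeta

lemma PV19_Cpos {α : ℝ} (h0 : 0 < α) (h2 : α < 2) : 0 < Cconst α := by
  unfold Cconst
  have g1 : 0 < Real.Gamma ((1+α)/2) := Real.Gamma_pos_of_pos (by linarith)
  have g2 : 0 < Real.Gamma (1 - α/2) := Real.Gamma_pos_of_pos (by linarith)
  have p1 : (0:ℝ) < (2:ℝ) ^ (1-α) := Real.rpow_pos_of_pos (by norm_num) _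
  have p2 : 0 < Real.sqrt Real.pi := Real.sqrt_pos.mpr Real.pi_pos
  positivity

lemma PV19_step {α : ℝ} (hα : 0 < α) {x : ℝ} (hx : 1 ≤ x) :
    (x+1) ^ (-(1+α)) ≤ (x ^ (-α) - (x+1) ^ (-α)) / α := by
  set f : ℝ → ℝ := fun y => y ^ (-α) with hf
  have hdiffAt : ∀ y ∈ Set.Icc x (x+1), DifferentiableAt ℝ f y := by
    intro y hy
    exact Real.differentiableAt_rpow_const_of_ne _
      (by rcases hy with ⟨hy1, _⟩; intro hcon; rw [hcon] at hy1; linarith)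
  obtain ⟨c, hc, hderiv⟩ := exists_deriv_eq_slope f (by linarith : x < x+1)
    (fun y hy => (hdiffAt y hy).continuousAt.continuousWithinAt)
    (fun y hy => ((hdiffAt y ⟨le_of_lt hy.1, le_of_lt hy.2⟩)).differentiableWithinAt)
  have hc0 : 0 < c := by rcases hc with ⟨hc1, _⟩; linarith
  have hd : deriv f c = (-α) * c ^ (-α - 1) := Real.deriv_rpow_const c (-α)
  rw [hd] at hderiv
  have hden : x + 1 - x = 1 := by ring
  rw [hden, div_one] at hderiv
  have key : f x - f (x+1) = α * c ^ (-α - 1) := by linarith [hderiv]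
  have hcle : (x+1) ^ (-α-1 : ℝ) ≤ c ^ (-α-1 : ℝ) :=
    Real.rpow_le_rpow_of_nonpos hc0 (le_of_lt hc.2) (by linarith)
  have hexp : (x+1) ^ (-(1+α)) = (x+1) ^ (-α-1 : ℝ) := by congr 1; ring
  rw [hexp, le_div_iff₀ hα]
  have hfx : f x = x ^ (-α) := rfl
  have hfx1 : f (x+1) = (x+1) ^ (-α) := rfl
  nlinarith [hcle, key]

lemma PV19_sum_nat {α : ℝ} (hα : 0 < α) (N : ℕ) :
    ∑ i ∈ Finset.range N, ((i:ℝ)+1) ^ (-(1+α)) ≤ 1 + 1/α := by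
  suffices H : ∀ N : ℕ, 1 ≤ N →
      ∑ i ∈ Finset.range N, ((i:ℝ)+1) ^ (-(1+α)) ≤ 1 + (1 - ((N:ℝ)) ^ (-α))/α by
    cases N with
    | zero => simp; positivity
    | succ n =>
      refine le_trans (H (n+1) (by omega)) ?_
      have h1 : (0:ℝ) ≤ (((n+1:ℕ)):ℝ) ^ (-α) := Real.rpow_nonneg (by positivity) _
      have h2 : (1 - (((n+1:ℕ)):ℝ) ^ (-α))/α ≤ 1/α := by gcongr; linarith
      linarith
  intro N hN
  induction N with
  | zero => omega
  | succ n ih =>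
    rcases Nat.lt_or_ge n 1 with hn | hn
    · have hn0 : n = 0 := by omega
      subst hn0
      simp only [Finset.range_one, Finset.sum_singleton, Nat.cast_zero, Nat.cast_one, zero_add]
      rw [Real.one_rpow, Real.one_rpow]
      norm_num
    · rw [Finset.sum_range_succ]
      have ihh := ih hn
      have hx1 : (1:ℝ) ≤ (n:ℝ) := by exact_mod_cast hn
      have hstep := PV19_step hα hx1
      have hcast : (((n+1:ℕ)):ℝ) = (n:ℝ) + 1 := by push_cast; ring
      rw [hcast]
      have hdivs : (1 - (n:ℝ)^(-α))/α + ((n:ℝ)^(-α) - ((n:ℝ)+1)^(-α))/α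
          = (1 - ((n:ℝ)+1)^(-α))/α := by rw [← add_div]; ring_nf
      linarith

lemma PV19_sum_abs {α : ℝ} (hα : 0 < α) (N : ℤ) :
    ∑ k ∈ (Finset.Icc (-N) N).erase 0, |(k:ℝ)| ^ (-(1+α)) ≤ 2 * (1 + 1/α) := by
  have hsplit : (Finset.Icc (-N) N).erase 0 = Finset.Icc (-N) (-1) ∪ Finset.Icc 1 N := by
    ext k
    simp only [Finset.mem_erase, Finset.mem_Icc, Finset.mem_union]
    omega
  have hdisj : Disjoint (Finset.Icc (-N) (-1)) (Finset.Icc (1:ℤ) N) := by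
    rw [Finset.disjoint_left]
    intro k hk1 hk2
    simp only [Finset.mem_Icc] at hk1 hk2
    omega
  rw [hsplit, Finset.sum_union hdisj]
  have hneg : ∑ k ∈ Finset.Icc (-N) (-1), |(k:ℝ)| ^ (-(1+α))
      = ∑ k ∈ Finset.Icc (1:ℤ) N, |(k:ℝ)| ^ (-(1+α)) := by
    apply Finset.sum_nbij' (i := fun k => -k) (j := fun k => -k)
    · intro a ha; simp only [Finset.mem_Icc] at *; omega
    · intro a ha; simp only [Finset.mem_Icc] at *; omega
    · intro a _; ring
    · intro a _; ring
    · intro a _; push_cast; rw [abs_neg]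
  have hposbound : ∑ k ∈ Finset.Icc (1:ℤ) N, |(k:ℝ)| ^ (-(1+α)) ≤ 1 + 1/α := by
    have hbij : ∑ k ∈ Finset.Icc (1:ℤ) N, |(k:ℝ)| ^ (-(1+α))
        = ∑ i ∈ Finset.range N.toNat, ((i:ℝ)+1) ^ (-(1+α)) := by
      refine Finset.sum_nbij' (fun k => (k-1).toNat) (fun i => (i:ℤ)+1) ?_ ?_ ?_ ?_ ?_
      · intro a ha; simp only [Finset.mem_Icc] at ha; simp only [Finset.mem_range]; omega
      · intro a ha; simp only [Finset.mem_range] at ha; simp only [Finset.mem_Icc]; omega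
      · intro a ha; simp only [Finset.mem_Icc] at ha; omega
      · intro a ha; simp only [Finset.mem_range] at ha; omega
      · intro a ha
        simp only [Finset.mem_Icc] at ha
        have hh1 : ((a-1).toNat : ℤ) = a - 1 := Int.toNat_of_nonneg (by omega)
        have hh2 : (((a-1).toNat : ℕ) : ℝ) + 1 = (a : ℝ) := by
          have := congrArg (fun z : ℤ => (z : ℝ)) hh1
          push_cast at this
          linarith
        rw [hh2]
        congr 1
        rw [abs_of_pos]
        exact_mod_cast ha.1
    rw [hbij]
    exact PV19_sum_nat hα N.toNat
  have hnn : (0:ℝ) ≤ ∑ k ∈ Finset.Icc (1:ℤ) N, |(k:ℝ)| ^ (-(1+α)) :=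
    Finset.sum_nonneg fun k _ => Real.rpow_nonneg (abs_nonneg _) _
  rw [hneg]
  linarith [hposbound]

lemma PV19_upper (α ε h Δt : ℝ) (J : ℤ)
    (hα : 0 < α) (hα2 : α < 2) (hε : 0 < ε) (hJ : 1 ≤ J)
    (hh : 0 < h) (hΔt : 0 < Δt)
    (P : ℕ → ℤ → ℝ)
    (hscheme : ∀ n : ℕ, ∀ j : ℤ, |j| < J →
      P (n + 1) j =
        P n j
          - Δt * ε * Cconst α * zetaR (α - 1) * h ^ (-α) *
              (P n (j - 1) - 2 * P n j + P n (j + 1))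
          + Δt * ε * Cconst α * h *
              dsum (-J - j) (J - j)
                (fun k => (P n (j + k) - P n j) / |(k : ℝ) * h| ^ (1 + α)))
    (hCFL : Δt / h ^ α ≤ 1 / (2 * ε * Cconst α * (1 + 1 / α - zetaR (α - 1))))
    (n : ℕ) (j : ℤ) (hj : |j| < J) (hne : (Finset.Icc (-J) J).Nonempty) :
    P (n + 1) j ≤ (Finset.Icc (-J) J).sup' hne (P n) := by
  have hC := PV19_Cpos hα hα2
  have hz : zetaR (α - 1) ≤ 0 := PV19_zetaR_nonpos (by linarith) (by linarith)
  set M := (Finset.Icc (-J) J).sup' hne (P n) with hM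
  have hub : ∀ i, -J ≤ i → i ≤ J → P n i ≤ M := fun i hi1 hi2 =>
    Finset.le_sup' (P n) (Finset.mem_Icc.mpr ⟨hi1, hi2⟩)
  have habsj := abs_lt.mp hj
  set e : ℤ → ℝ := fun k =>
    (if k = -J - j ∨ k = J - j then (1:ℝ)/2 else 1) / (|(k:ℝ)| ^ (1+α) * h ^ (1+α)) with he
  have he0 : ∀ k, 0 ≤ e k := by
    intro k
    simp only [he]
    apply div_nonneg
    · split <;> norm_num
    · positivity
  have habs : ∀ k : ℤ, |(k:ℝ) * h| ^ (1+α) = |(k:ℝ)| ^ (1+α) * h ^ (1+α) := by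
    intro k; rw [abs_mul, abs_of_pos hh, Real.mul_rpow (abs_nonneg _) hh.le]
  have hkey : P (n+1) j - M
      = (1 + 2*(Δt * ε * Cconst α * zetaR (α - 1) * h ^ (-α))
           - (Δt * ε * Cconst α * h) *
              (∑ k ∈ (Finset.Icc (-J - j) (J - j)).erase 0, e k)) * (P n j - M)
        + (-(Δt * ε * Cconst α * zetaR (α - 1) * h ^ (-α)))
            * ((P n (j-1) - M) + (P n (j+1) - M))
        + (Δt * ε * Cconst α * h) *
            (∑ k ∈ (Finset.Icc (-J - j) (J - j)).erase 0, e k * (P n (j+k) - M)) := by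
    rw [hscheme n j hj]
    simp only [dsum]
    have hsum1 : ∑ k ∈ (Finset.Icc (-J - j) (J - j)).erase 0,
        (if k = -J - j ∨ k = J - j then (1:ℝ)/2 else 1)
          * ((P n (j + k) - P n j) / |(k:ℝ) * h| ^ (1 + α))
        = ∑ k ∈ (Finset.Icc (-J - j) (J - j)).erase 0,
            (e k * (P n (j+k) - M) - e k * (P n j - M)) := by
      apply Finset.sum_congr rfl
      intro k _
      rw [habs k]
      simp only [he]
      ring
    rw [hsum1, Finset.sum_sub_distrib, ← Finset.sum_mul]
    ring
  have hSle : (∑ k ∈ (Finset.Icc (-J - j) (J - j)).erase 0, e k)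
      ≤ 2 * (1 + 1/α) * h ^ (-(1+α)) := by
    have hTle : ∀ k ∈ (Finset.Icc (-J - j) (J - j)).erase 0,
        e k ≤ |(k:ℝ)| ^ (-(1+α)) * h ^ (-(1+α)) := by
      intro k hk
      have hk0 : k ≠ 0 := (Finset.mem_erase.mp hk).1
      have habsk : (1:ℝ) ≤ |(k:ℝ)| := by
        rw [← Int.cast_abs]
        exact_mod_cast Int.one_le_abs (by omega)
      have habsk0 : (0:ℝ) < |(k:ℝ)| := lt_of_lt_of_le one_pos habsk
      simp only [he]
      rw [Real.rpow_neg (abs_nonneg _), Real.rpow_neg hh.le, ← mul_inv, inv_eq_one_div]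
      have hpos : (0:ℝ) < |(k:ℝ)| ^ (1+α) * h ^ (1+α) :=
        mul_pos (Real.rpow_pos_of_pos habsk0 _) (Real.rpow_pos_of_pos hh _)
      exact (div_le_div_iff_of_pos_right hpos).mpr (by split <;> norm_num)
    calc (∑ k ∈ (Finset.Icc (-J - j) (J - j)).erase 0, e k)
        ≤ ∑ k ∈ (Finset.Icc (-J - j) (J - j)).erase 0,
            |(k:ℝ)| ^ (-(1+α)) * h ^ (-(1+α)) := Finset.sum_le_sum hTle
      _ = (∑ k ∈ (Finset.Icc (-J - j) (J - j)).erase 0, |(k:ℝ)| ^ (-(1+α)))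
            * h ^ (-(1+α)) := by rw [Finset.sum_mul]
      _ ≤ 2 * (1 + 1/α) * h ^ (-(1+α)) := by
          apply mul_le_mul_of_nonneg_right _ (Real.rpow_nonneg hh.le _)
          refine le_trans (Finset.sum_le_sum_of_subset_of_nonneg ?_ ?_)
            (PV19_sum_abs hα (J + |j|))
          · intro k hk
            simp only [Finset.mem_erase, Finset.mem_Icc] at hk ⊢
            have h1 : j ≤ |j| := le_abs_self j
            have h2 : -j ≤ |j| := neg_le_abs j
            refine ⟨hk.1, by linarith [hk.2.1], by linarith [hk.2.2]⟩
          · intro k _ _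
            exact Real.rpow_nonneg (abs_nonneg _) _
  have hcoef : 0 ≤ 1 + 2*(Δt * ε * Cconst α * zetaR (α - 1) * h ^ (-α))
      - (Δt * ε * Cconst α * h) * (∑ k ∈ (Finset.Icc (-J - j) (J - j)).erase 0, e k) := by
    have hX : 0 < 1 + 1/α - zetaR (α - 1) := by
      have h1 : 0 < 1/α := by positivity
      linarith
    have hhα : 0 < h ^ α := Real.rpow_pos_of_pos hh α
    have hden : 0 < 2 * ε * Cconst α * (1 + 1/α - zetaR (α - 1)) := by positivity
    have hcfl2 : Δt * (2 * ε * Cconst α * (1 + 1/α - zetaR (α - 1))) ≤ h ^ α := by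
      have hd := (div_le_div_iff₀ hhα hden).mp hCFL
      linarith [hd]
    have hmul : h * h ^ (-(1+α)) = h ^ (-α) := by
      have e1 : h * h ^ (-(1+α)) = h ^ (1:ℝ) * h ^ (-(1+α)) := by rw [Real.rpow_one]
      rw [e1, ← Real.rpow_add hh]
      congr 1
      ring
    have hS2 : (Δt * ε * Cconst α * h) * (∑ k ∈ (Finset.Icc (-J - j) (J - j)).erase 0, e k)
        ≤ Δt * ε * Cconst α * (2*(1+1/α)) * h ^ (-α) := by
      calc (Δt * ε * Cconst α * h) * (∑ k ∈ (Finset.Icc (-J - j) (J - j)).erase 0, e k)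
          ≤ (Δt * ε * Cconst α * h) * (2 * (1 + 1/α) * h ^ (-(1+α))) := by
            apply mul_le_mul_of_nonneg_left hSle (by positivity)
        _ = Δt * ε * Cconst α * (2*(1+1/α)) * (h * h ^ (-(1+α))) := by ring
        _ = Δt * ε * Cconst α * (2*(1+1/α)) * h ^ (-α) := by rw [hmul]
    have hfinal : Δt * ε * Cconst α * (2*(1+1/α)) * h ^ (-α)
        + 2*(Δt*ε*Cconst α)*(-(zetaR (α - 1)))*h^(-α) ≤ 1 := by
      have heq : Δt * ε * Cconst α * (2*(1+1/α)) * h^(-α)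
          + 2*(Δt*ε*Cconst α)*(-(zetaR (α - 1)))*h^(-α)
          = (Δt * (2 * ε * Cconst α * (1 + 1/α - zetaR (α - 1)))) * (h^α)⁻¹ := by
        rw [Real.rpow_neg hh.le]
        ring
      rw [heq]
      calc (Δt * (2 * ε * Cconst α * (1 + 1/α - zetaR (α - 1)))) * (h^α)⁻¹
          ≤ (h^α) * (h^α)⁻¹ := by
            apply mul_le_mul_of_nonneg_right hcfl2 (inv_nonneg.mpr hhα.le)
        _ = 1 := mul_inv_cancel₀ (ne_of_gt hhα)
    have hBeq : 2*(Δt * ε * Cconst α * zetaR (α - 1) * h ^ (-α))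
        = -(2*(Δt*ε*Cconst α)*(-(zetaR (α - 1)))*h^(-α)) := by ring
    linarith [hS2, hfinal, hBeq]
  have hQ0 : P n j - M ≤ 0 := sub_nonpos.mpr (hub j (by omega) (by omega))
  have hQm : P n (j-1) - M ≤ 0 := sub_nonpos.mpr (hub _ (by omega) (by omega))
  have hQp : P n (j+1) - M ≤ 0 := sub_nonpos.mpr (hub _ (by omega) (by omega))
  have hsum_nonpos : ∑ k ∈ (Finset.Icc (-J - j) (J - j)).erase 0,
      e k * (P n (j+k) - M) ≤ 0 := by
    apply Finset.sum_nonpos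
    intro k hk
    have hmem := Finset.mem_Icc.mp (Finset.mem_of_mem_erase hk)
    have hQk : P n (j+k) - M ≤ 0 := sub_nonpos.mpr (hub _ (by omega) (by omega))
    exact mul_nonpos_iff.mpr (Or.inl ⟨he0 k, hQk⟩)
  have hA_nonneg : 0 ≤ -(Δt * ε * Cconst α * zetaR (α - 1) * h ^ (-α)) := by
    have h1 : 0 ≤ (Δt * ε * Cconst α) * (-(zetaR (α-1))) * h^(-α) :=
      mul_nonneg (mul_nonneg (by positivity) (by linarith)) (Real.rpow_nonneg hh.le _)
    have h2 : -(Δt * ε * Cconst α * zetaR (α - 1) * h ^ (-α))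
        = (Δt * ε * Cconst α) * (-(zetaR (α-1))) * h^(-α) := by ring
    linarith [h1, h2]
  have t1 : (1 + 2*(Δt * ε * Cconst α * zetaR (α - 1) * h ^ (-α))
           - (Δt * ε * Cconst α * h) *
              (∑ k ∈ (Finset.Icc (-J - j) (J - j)).erase 0, e k)) * (P n j - M) ≤ 0 :=
    mul_nonpos_iff.mpr (Or.inl ⟨hcoef, hQ0⟩)
  have t2 : (-(Δt * ε * Cconst α * zetaR (α - 1) * h ^ (-α)))
      * ((P n (j-1) - M) + (P n (j+1) - M)) ≤ 0 :=
    mul_nonpos_iff.mpr (Or.inl ⟨hA_nonneg, by linarith⟩)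
  have t3 : (Δt * ε * Cconst α * h) *
      (∑ k ∈ (Finset.Icc (-J - j) (J - j)).erase 0, e k * (P n (j+k) - M)) ≤ 0 :=
    mul_nonpos_iff.mpr (Or.inl ⟨by positivity, hsum_nonpos⟩)
  linarith [hkey, t1, t2, t3]

/-- Discrete comparison principle for the explicit Euler scheme with the natural
condition: each new interior value lies between the min and max of the previous
values over `{k : |k| ≤ J}`. -/
theorem stmt_19 (α ε h Δt : ℝ) (J : ℤ)
    (hα : 0 < α) (hα2 : α < 2) (hε : 0 < ε) (hJ : 1 ≤ J)
    (hh : 0 < h) (hΔt : 0 < Δt)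
    (P : ℕ → ℤ → ℝ)
    (hbc : ∀ n : ℕ, ∀ j : ℤ, J ≤ |j| → P n j = 0)
    (hscheme : ∀ n : ℕ, ∀ j : ℤ, |j| < J →
      P (n + 1) j =
        P n j
          - Δt * ε * Cconst α * zetaR (α - 1) * h ^ (-α) *
              (P n (j - 1) - 2 * P n j + P n (j + 1))
          + Δt * ε * Cconst α * h *
              dsum (-J - j) (J - j)
                (fun k => (P n (j + k) - P n j) / |(k : ℝ) * h| ^ (1 + α)))
    (hCFL : Δt / h ^ α ≤ 1 / (2 * ε * Cconst α * (1 + 1 / α - zetaR (α - 1)))) :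
    ∀ n : ℕ, ∀ j : ℤ, |j| < J →
      (Finset.Icc (-J) J).inf' (Finset.nonempty_Icc.mpr (by omega)) (P n) ≤ P (n + 1) j ∧
      P (n + 1) j ≤ (Finset.Icc (-J) J).sup' (Finset.nonempty_Icc.mpr (by omega)) (P n) := by
  intro n j hj
  have hne : (Finset.Icc (-J) J).Nonempty := Finset.nonempty_Icc.mpr (by omega)
  set P' : ℕ → ℤ → ℝ := fun m i => - P m i with hP'
  have hscheme' : ∀ m : ℕ, ∀ i : ℤ, |i| < J →
      P' (m + 1) i =
        P' m i
          - Δt * ε * Cconst α * zetaR (α - 1) * h ^ (-α) *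
              (P' m (i - 1) - 2 * P' m i + P' m (i + 1))
          + Δt * ε * Cconst α * h *
              dsum (-J - i) (J - i)
                (fun k => (P' m (i + k) - P' m i) / |(k : ℝ) * h| ^ (1 + α)) := by
    intro m i hi
    simp only [hP']
    rw [hscheme m i hi]
    have hds : dsum (-J - i) (J - i)
        (fun k => (-P m (i + k) - -P m i) / |(k : ℝ) * h| ^ (1 + α))
        = - dsum (-J - i) (J - i)
            (fun k => (P m (i + k) - P m i) / |(k : ℝ) * h| ^ (1 + α)) := by
      simp only [dsum, ← Finset.sum_neg_distrib]
      apply Finset.sum_congr rfl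
      intro k _
      ring
    rw [hds]
    ring
  have hupper := PV19_upper α ε h Δt J hα hα2 hε hJ hh hΔt P hscheme hCFL n j hj hne
  have hlow := PV19_upper α ε h Δt J hα hα2 hε hJ hh hΔt P' hscheme' hCFL n j hj hne
  have hsup : (Finset.Icc (-J) J).sup' hne (P' n) = - (Finset.Icc (-J) J).inf' hne (P n) := by
    apply le_antisymm
    · obtain ⟨i, hi, hival⟩ := Finset.exists_mem_eq_sup' hne (P' n)
      rw [hival]
      simp only [hP']
      have := Finset.inf'_le (P n) hi
      linarith
    · obtain ⟨i, hi, hival⟩ := Finset.exists_mem_eq_inf' hne (P n)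
      rw [hival]
      have := Finset.le_sup' (P' n) hi
      simp only [hP'] at this
      linarith
  rw [hsup] at hlow
  simp only [hP'] at hlow
  constructor
  · have hgoal : (Finset.Icc (-J) J).inf' hne (P n) ≤ P (n + 1) j := by linarith
    exact hgoal
  · exact hupper
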